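/- Let 𝔤 be a 5-dimensional real Lie algebra admitting a coherent splitting 𝔤* = V₁ ⊕ V₂ with dim V₁ = 2, and let φ span Λ²V₁. Suppose every closed 2-form γ on 𝔤 satisfies γ∧φ = 0 and every closed 3-form η satisfies η∧φ = 0. Then 𝔤 admits no hypo structure, i.e. there is no SU(2)-structure (α, ω₁, ω₂, ω₃) on 𝔤 with dω₁ = 0, d(ω₂∧α) = 0, d(ω₃∧α) = 0. -/

import Mathlib

open ExteriorAlgebra

/-- Module.Basis `e¹,…,e⁵` of `𝔤*` (0-indexed: `e i` is `e^{i+1}`) inside `Λ*𝔤*`. -/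
noncomputable def e (i : Fin 5) : ExteriorAlgebra ℝ (Fin 5 → ℝ) := ι ℝ (Pi.single i 1)

/-- The space of 2-forms `Λ²𝔤*` (spanned by decomposable 2-forms). -/
noncomputable def Lam2 : Submodule ℝ (ExteriorAlgebra ℝ (Fin 5 → ℝ)) :=
  Submodule.span ℝ {x | ∃ a b : Fin 5 → ℝ, x = ι ℝ a * ι ℝ b}

/-- The space of 3-forms `Λ³𝔤*`. -/
noncomputable def Lam3 : Submodule ℝ (ExteriorAlgebra ℝ (Fin 5 → ℝ)) :=
  Submodule.span ℝ {x | ∃ a b c : Fin 5 → ℝ, x = ι ℝ a * ι ℝ b * ι ℝ c}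

/-- A hypo structure on the 5-dimensional Lie algebra encoded by its Chevalley–Eilenberg
differential `d`: a quadruplet `(α, ω₁, ω₂, ω₃)` of a 1-form `α = ι a` and 2-forms `ωᵢ`
with `ωᵢ∧ωⱼ = δᵢⱼ v` for a 4-form `v` with `v∧α ≠ 0`, such that
`dω₁ = 0`, `d(ω₂∧α) = 0`, `d(ω₃∧α) = 0`. -/
def IsHypo (d : ExteriorAlgebra ℝ (Fin 5 → ℝ) →ₗ[ℝ] ExteriorAlgebra ℝ (Fin 5 → ℝ))
    (a : Fin 5 → ℝ) (ω : Fin 3 → ExteriorAlgebra ℝ (Fin 5 → ℝ)) : Prop :=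
  (∀ i, ω i ∈ Lam2) ∧
  (∃ v : ExteriorAlgebra ℝ (Fin 5 → ℝ),
    (∀ i j, ω i * ω j = if i = j then v else 0) ∧ v * ι ℝ a ≠ 0) ∧
  d (ω 0) = 0 ∧ d (ω 1 * ι ℝ a) = 0 ∧ d (ω 2 * ι ℝ a) = 0

/-! ### Auxiliary machinery -/

section Aux

set_option linter.unusedTactic false
set_option linter.unreachableTactic false
set_option linter.unnecessarySimpa false

local notation "Λ" => ExteriorAlgebra ℝ (Fin 5 → ℝ)

/-! #### The core quadratic-form fact: in a signature (2,2) space there is no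
orthogonal triple of equal nonzero norm. -/


private lemma corePos (A B C D : Fin 3 → ℝ) (t : ℝ) (ht : 0 < t)
    (h : ∀ i j, A i * D j + D i * A j - (B i * C j + C i * B j) =
      if i = j then t else 0) : False := by
  set u : Fin 3 → Fin 2 → ℝ := fun i => ![A i + D i, B i - C i] with hu
  have hnli : ¬ LinearIndependent ℝ u := by
    intro hli
    have := hli.fintype_card_le_finrank
    simp [Module.finrank_pi] at this
  obtain ⟨g, hg, i₀, hi₀⟩ := Fintype.not_linearIndependent_iff.mp hnli
  have hg0 : g 0 * (A 0 + D 0) + g 1 * (A 1 + D 1) + g 2 * (A 2 + D 2) = 0 := by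
    have := congrFun hg 0
    simpa [u, Fin.sum_univ_three, mul_comm] using this
  have hg1 : g 0 * (B 0 - C 0) + g 1 * (B 1 - C 1) + g 2 * (B 2 - C 2) = 0 := by
    have := congrFun hg 1
    simpa [u, Fin.sum_univ_three, mul_comm] using this
  have h00 := h 0 0; have h01 := h 0 1; have h02 := h 0 2
  have h11 := h 1 1; have h12 := h 1 2; have h22 := h 2 2
  simp only [if_pos, if_neg, Fin.ext_iff] at h00 h01 h02 h11 h12 h22
  norm_num at h00 h01 h02 h11 h12 h22
  have hgsq : 0 < g 0 ^ 2 + g 1 ^ 2 + g 2 ^ 2 := by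
    fin_cases i₀ <;> positivity
  have key : (g 0 * (A 0 + D 0) + g 1 * (A 1 + D 1) + g 2 * (A 2 + D 2)) ^ 2
      + (g 0 * (B 0 - C 0) + g 1 * (B 1 - C 1) + g 2 * (B 2 - C 2)) ^ 2
      - (g 0 * (A 0 - D 0) + g 1 * (A 1 - D 1) + g 2 * (A 2 - D 2)) ^ 2
      - (g 0 * (B 0 + C 0) + g 1 * (B 1 + C 1) + g 2 * (B 2 + C 2)) ^ 2
      = 2 * t * (g 0 ^ 2 + g 1 ^ 2 + g 2 ^ 2) := by
    linear_combination (2 * g 0 ^ 2) * h00 + (2 * g 1 ^ 2) * h11 + (2 * g 2 ^ 2) * h22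
      + (4 * g 0 * g 1) * h01 + (4 * g 0 * g 2) * h02 + (4 * g 1 * g 2) * h12
  rw [hg0, hg1] at key
  nlinarith [sq_nonneg (g 0 * (A 0 - D 0) + g 1 * (A 1 - D 1) + g 2 * (A 2 - D 2)),
    sq_nonneg (g 0 * (B 0 + C 0) + g 1 * (B 1 + C 1) + g 2 * (B 2 + C 2)),
    mul_pos (mul_pos two_pos ht) hgsq]

private lemma core (A B C D : Fin 3 → ℝ) (t : ℝ) (ht : t ≠ 0)
    (h : ∀ i j, A i * D j + D i * A j - (B i * C j + C i * B j) =
      if i = j then t else 0) : False := by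
  rcases ht.lt_or_gt with hlt | hgt
  · refine corePos B A D C (-t) (by linarith) (fun i j => ?_)
    have hh := h i j
    by_cases hij : i = j
    · rw [if_pos hij] at hh ⊢; linarith
    · rw [if_neg hij] at hh ⊢; linarith
  · exact corePos A B C D t hgt h

/-! #### Monomial calculus in the exterior algebra -/

private lemma esq (i : Fin 5) : e i * e i = 0 := ι_sq_zero _
private lemma esq' (i : Fin 5) (x : Λ) : e i * (e i * x) = 0 := by
  rw [← mul_assoc, esq, zero_mul]
private lemma eswap (i j : Fin 5) (_ : j < i) : e i * e j = -(e j * e i) :=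
  eq_neg_of_add_eq_zero_left (ι_add_mul_swap _ _)
private lemma eswap' (i j : Fin 5) (x : Λ) (h : j < i) : e i * (e j * x) = -(e j * (e i * x)) := by
  rw [← mul_assoc, eswap i j h, neg_mul, mul_assoc]

/-- The ten monomials spanning the 2-forms. -/
private noncomputable def M10 : Fin 10 → Λ := fun k =>
  match k with
  | 0 => e 0 * e 1
  | 1 => e 0 * e 2
  | 2 => e 0 * e 3
  | 3 => e 0 * e 4
  | 4 => e 1 * e 2
  | 5 => e 1 * e 3
  | 6 => e 1 * e 4
  | 7 => e 2 * e 3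
  | 8 => e 2 * e 4
  | 9 => e 3 * e 4

/-- A generic 2-form with coordinates `c`. -/
private noncomputable def S (c : Fin 10 → ℝ) : Λ :=
  c 0 • (e 0 * e 1) + c 1 • (e 0 * e 2) + c 2 • (e 0 * e 3) + c 3 • (e 0 * e 4) +
  c 4 • (e 1 * e 2) + c 5 • (e 1 * e 3) + c 6 • (e 1 * e 4) + c 7 • (e 2 * e 3) +
  c 8 • (e 2 * e 4) + c 9 • (e 3 * e 4)

private noncomputable def E5 : Λ := e 0 * (e 1 * (e 2 * (e 3 * e 4)))

set_option maxHeartbeats 1000000 in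
private lemma S_rep {x : ExteriorAlgebra ℝ (Fin 5 → ℝ)}
    (hx : x ∈ Submodule.span ℝ (Set.range M10)) :
    ∃ c : Fin 10 → ℝ, x = S c := by
  classical
  induction hx using Submodule.span_induction with
  | mem x hx =>
    obtain ⟨k, rfl⟩ := hx
    refine ⟨Pi.single k 1, ?_⟩
    fin_cases k <;>
      simp (config := { decide := true }) [M10, S, Pi.single_apply]
  | zero => exact ⟨0, by simp [S]⟩
  | add x y _ _ hx hy =>
    obtain ⟨c, rfl⟩ := hx; obtain ⟨c', rfl⟩ := hy
    refine ⟨fun i => c i + c' i, ?_⟩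
    simp only [S, add_smul]
    abel
  | smul r x _ hx =>
    obtain ⟨c, rfl⟩ := hx
    refine ⟨fun i => r * c i, ?_⟩
    simp only [S, mul_smul, smul_add]

/-- The quadratic pairing: coefficient of `ω∧ω'∧e⁰` on the volume form. -/
private noncomputable def BA (c c' : Fin 10 → ℝ) : ℝ :=
  (c 4 * c' 9 + c 9 * c' 4) - (c 5 * c' 8 + c 8 * c' 5) + (c 6 * c' 7 + c 7 * c' 6)

set_option maxHeartbeats 4000000 in
private lemma expandA (c c' : Fin 10 → ℝ) : S c * S c' * e 0 = BA c c' • E5 := by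
  rw [BA]
  simp only [S, E5, add_mul, mul_add, smul_mul_assoc, mul_smul_comm, mul_assoc]
  simp (config := { decide := true }) only [eswap, eswap', esq, esq',
    mul_neg, neg_mul, mul_zero, zero_mul, neg_neg, neg_zero, smul_neg, smul_zero,
    add_zero, zero_add]
  all_goals module

set_option maxHeartbeats 1000000 in
private lemma expandB (c : Fin 10 → ℝ) : S c * (e 1 * e 2) * e 0 = c 9 • E5 := by
  simp only [S, E5, add_mul, mul_add, smul_mul_assoc, mul_smul_comm, mul_assoc]
  simp (config := { decide := true }) only [eswap, eswap', esq, esq',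
    mul_neg, neg_mul, mul_zero, zero_mul, neg_neg, neg_zero, smul_neg, smul_zero,
    add_zero, zero_add]
  all_goals module

set_option maxHeartbeats 1000000 in
private lemma expandC (c : Fin 10 → ℝ) : S c * e 0 * (e 1 * e 2) = c 9 • E5 := by
  simp only [S, E5, add_mul, mul_add, smul_mul_assoc, mul_smul_comm, mul_assoc]
  simp (config := { decide := true }) only [eswap, eswap', esq, esq',
    mul_neg, neg_mul, mul_zero, zero_mul, neg_neg, neg_zero, smul_neg, smul_zero,
    add_zero, zero_add]
  all_goals module

set_option maxHeartbeats 1000000 in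
private lemma expandD (c : Fin 10 → ℝ) : S c * (e 0 * e 1) * e 2 = c 9 • E5 := by
  simp only [S, E5, add_mul, mul_add, smul_mul_assoc, mul_smul_comm, mul_assoc]
  simp (config := { decide := true }) only [eswap, eswap', esq, esq',
    mul_neg, neg_mul, mul_zero, zero_mul, neg_neg, neg_zero, smul_neg, smul_zero,
    add_zero, zero_add]
  all_goals module

set_option maxHeartbeats 1000000 in
private lemma expandE (c : Fin 10 → ℝ) : S c * (e 0 * e 1) * e 3 = -(c 8) • E5 := by
  simp only [S, E5, add_mul, mul_add, smul_mul_assoc, mul_smul_comm, mul_assoc]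
  simp (config := { decide := true }) only [eswap, eswap', esq, esq',
    mul_neg, neg_mul, mul_zero, zero_mul, neg_neg, neg_zero, smul_neg, smul_zero,
    add_zero, zero_add]
  all_goals module

set_option maxHeartbeats 1000000 in
private lemma expandF (c : Fin 10 → ℝ) : S c * (e 0 * e 1) * e 4 = c 7 • E5 := by
  simp only [S, E5, add_mul, mul_add, smul_mul_assoc, mul_smul_comm, mul_assoc]
  simp (config := { decide := true }) only [eswap, eswap', esq, esq',
    mul_neg, neg_mul, mul_zero, zero_mul, neg_neg, neg_zero, smul_neg, smul_zero,
    add_zero, zero_add]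
  all_goals module

/-! #### Membership lemmas -/

private lemma mul_ι_mem_Lam3 {ω : Λ} (hω : ω ∈ Lam2) (a : Fin 5 → ℝ) : ω * ι ℝ a ∈ Lam3 := by
  induction hω using Submodule.span_induction with
  | mem x hx => obtain ⟨u, v, rfl⟩ := hx; exact Submodule.subset_span ⟨u, v, a, rfl⟩
  | zero => simpa using Submodule.zero_mem Lam3
  | add x y _ _ hx hy => rw [add_mul]; exact Submodule.add_mem _ hx hy
  | smul r x _ hx => rw [smul_mul_assoc]; exact Submodule.smul_mem _ r hx

private lemma ι_eq_sum (a : Fin 5 → ℝ) : ι ℝ a = ∑ i : Fin 5, a i • e i := by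
  have h : a = ∑ i : Fin 5, a i • (Pi.single i 1 : Fin 5 → ℝ) := by
    funext j
    simp [Pi.single_apply, Finset.sum_ite_eq', mul_comm]
  calc ι ℝ a = ι ℝ (∑ i : Fin 5, a i • (Pi.single i 1 : Fin 5 → ℝ)) := by rw [← h]
  _ = ∑ i : Fin 5, a i • e i := by rw [map_sum]; simp [e]

private lemma Lam2_le : Lam2 ≤ Submodule.span ℝ (Set.range M10) := by
  have key : ∀ i j : Fin 5, e i * e j ∈ Submodule.span ℝ (Set.range M10) := by
    have h : ∀ k : Fin 10, M10 k ∈ Submodule.span ℝ (Set.range M10) :=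
      fun k => Submodule.subset_span (Set.mem_range_self k)
    intro i j
    rcases lt_trichotomy i j with hij | rfl | hij
    · fin_cases i <;> fin_cases j <;> simp_all <;>
        first | exact h 0 | exact h 1 | exact h 2 | exact h 3 | exact h 4 | exact h 5
              | exact h 6 | exact h 7 | exact h 8 | exact h 9
    · rw [esq]; exact Submodule.zero_mem _
    · rw [eswap i j hij]
      refine Submodule.neg_mem _ ?_
      fin_cases i <;> fin_cases j <;> simp_all <;>
        first | exact h 0 | exact h 1 | exact h 2 | exact h 3 | exact h 4 | exact h 5
              | exact h 6 | exact h 7 | exact h 8 | exact h 9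
  rw [Lam2, Submodule.span_le]
  rintro x ⟨a, b, rfl⟩
  rw [ι_eq_sum a, ι_eq_sum b, Finset.sum_mul_sum]
  refine Submodule.sum_mem _ fun i _ => Submodule.sum_mem _ fun j _ => ?_
  rw [smul_mul_smul_comm]
  exact Submodule.smul_mem _ _ (key i j)

/-! #### Transport along a linear automorphism -/

private lemma Phi_ne_zero (g : (Fin 5 → ℝ) ≃ₗ[ℝ] (Fin 5 → ℝ)) {x : Λ}
    (hx : x ≠ 0) : map g.toLinearMap x ≠ 0 := by
  intro h
  have hid : (g.symm.toLinearMap ∘ₗ g.toLinearMap) = LinearMap.id := by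
    ext v; simp
  have : map g.symm.toLinearMap (map g.toLinearMap x) = x := by
    rw [← AlgHom.comp_apply, ExteriorAlgebra.map_comp_map, hid, ExteriorAlgebra.map_id]
    rfl
  rw [h, map_zero] at this
  exact hx this.symm

private lemma map_mem_Lam2 (g : (Fin 5 → ℝ) ≃ₗ[ℝ] (Fin 5 → ℝ)) {ω : Λ} (hω : ω ∈ Lam2) :
    map g.toLinearMap ω ∈ Lam2 := by
  induction hω using Submodule.span_induction with
  | mem x hx =>
    obtain ⟨u, v, rfl⟩ := hx
    rw [map_mul, map_apply_ι, map_apply_ι]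
    exact Submodule.subset_span ⟨g u, g v, rfl⟩
  | zero => simpa using Submodule.zero_mem Lam2
  | add x y _ _ hx hy => rw [map_add]; exact Submodule.add_mem _ hx hy
  | smul r x _ hx => rw [map_smul]; exact Submodule.smul_mem _ r hx

private lemma equivFun_basis (f : Module.Basis (Fin 5) ℝ (Fin 5 → ℝ)) (i : Fin 5) :
    map (f.equivFun : (Fin 5 → ℝ) ≃ₗ[ℝ] (Fin 5 → ℝ)).toLinearMap (ι ℝ (f i)) = e i := by
  rw [map_apply_ι]
  unfold e
  congr 1
  funext j
  rw [LinearEquiv.coe_coe]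
  classical
  simp [Module.Basis.equivFun_self, Pi.single_apply, eq_comm]

/-! #### Extending linearly independent families to a basis -/

private lemma sumExtend_inl {K V ι : Type*} [DivisionRing K] [AddCommGroup V] [Module K V]
    (v : ι → V) (hs : LinearIndependent K v) (i : ι) :
    Module.Basis.sumExtend hs (Sum.inl i) = v i := by
  simp only [Module.Basis.sumExtend, Module.Basis.reindex_apply, Equiv.symm_symm, Equiv.instTrans,
    Equiv.trans_apply, Equiv.sumCongr_apply, Sum.map_inl, Equiv.Set.sumDiffSubset_apply_inl,
    Module.Basis.extend_apply_self]
  rfl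

private lemma exists_basis_extending {n : ℕ} (hn : n ≤ 5) (v : Fin n → (Fin 5 → ℝ))
    (hs : LinearIndependent ℝ v) :
    ∃ f : Module.Basis (Fin 5) ℝ (Fin 5 → ℝ), ∀ i : Fin n, f ⟨i.val, by omega⟩ = v i := by
  classical
  letI : Fintype (Module.Basis.sumExtendIndex hs) := @Fintype.sumRight _ _
    (IsNoetherian.fintypeBasisIndex (K := ℝ) (V := Fin 5 → ℝ) (Module.Basis.sumExtend hs))
  have h5 : Module.finrank ℝ (Fin 5 → ℝ) = 5 := by simp [Module.finrank_pi]
  rw [Module.finrank_eq_card_basis (Module.Basis.sumExtend hs), Fintype.card_sum] at h5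
  simp only [Fintype.card_fin] at h5
  have h2 : Fintype.card (Module.Basis.sumExtendIndex hs) = 5 - n := by omega
  refine ⟨(Module.Basis.sumExtend hs).reindex
    ((Equiv.sumCongr (Equiv.refl (Fin n)) (Fintype.equivFinOfCardEq h2)).trans
      ((finSumFinEquiv (m := n) (n := 5-n)).trans (finCongr (by omega)))), fun i => ?_⟩
  rw [Module.Basis.reindex_apply]
  have hE : (((Equiv.sumCongr (Equiv.refl (Fin n)) (Fintype.equivFinOfCardEq h2)).trans
      ((finSumFinEquiv (m := n) (n := 5-n)).trans (finCongr (by omega)))).symm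
        (⟨i.val, by omega⟩ : Fin 5)) = Sum.inl i := by
    rw [Equiv.symm_apply_eq]
    simp [Equiv.sumCongr_apply, finSumFinEquiv_apply_left, finCongr, Fin.ext_iff]
  rw [hE, sumExtend_inl]

end Aux

set_option maxHeartbeats 3000000 in
/-- let `𝔤` be a 5-dimensional real Lie algebra (encoded by its
Chevalley–Eilenberg differential `d`) with a coherent splitting `𝔤* = V₁ ⊕ V₂`,
`dim V₁ = 2`, and let `φ = ι(v₁)∧ι(v₂)` span `Λ²V₁`. If every closed 2-form `γ`
satisfies `γ∧φ = 0` and every closed 3-form `η` satisfies `η∧φ = 0`, then `𝔤`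
admits no hypo structure. -/
theorem stmt6 (d : ExteriorAlgebra ℝ (Fin 5 → ℝ) →ₗ[ℝ] ExteriorAlgebra ℝ (Fin 5 → ℝ))
    (hone : d 1 = 0)
    (hleib : ∀ (v : Fin 5 → ℝ) (x : ExteriorAlgebra ℝ (Fin 5 → ℝ)),
      d (ι ℝ v * x) = d (ι ℝ v) * x - ι ℝ v * d x)
    (hdd : ∀ x, d (d x) = 0)
    (V1 V2 : Submodule ℝ (Fin 5 → ℝ)) (hcompl : IsCompl V1 V2)
    (hdim : Module.finrank ℝ V1 = 2)
    (hc1 : ∀ m ∈ V1, d (ι ℝ m) ∈ Submodule.span ℝ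
      {y : ExteriorAlgebra ℝ (Fin 5 → ℝ) | ∃ a ∈ V1, ∃ b ∈ V1, y = ι ℝ a * ι ℝ b})
    (hc2 : ∀ m ∈ V2, d (ι ℝ m) ∈ Submodule.span ℝ
      {y : ExteriorAlgebra ℝ (Fin 5 → ℝ) | ∃ a ∈ V1, ∃ b : Fin 5 → ℝ, y = ι ℝ a * ι ℝ b})
    (v1 v2 : Fin 5 → ℝ) (hv1 : v1 ∈ V1) (hv2 : v2 ∈ V1)
    (hvli : LinearIndependent ℝ ![v1, v2])
    (hZ2 : ∀ γ ∈ Lam2, d γ = 0 → γ * (ι ℝ v1 * ι ℝ v2) = 0)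
    (hZ3 : ∀ η ∈ Lam3, d η = 0 → η * (ι ℝ v1 * ι ℝ v2) = 0) :
    ¬ ∃ (a : Fin 5 → ℝ) (ω : Fin 3 → ExteriorAlgebra ℝ (Fin 5 → ℝ)), IsHypo d a ω := by
  rintro ⟨a, ω, hL2, ⟨v, hprod, hva⟩, hd1, hd2, hd3⟩
  have P0 : ω 0 * (ι ℝ v1 * ι ℝ v2) = 0 := hZ2 _ (hL2 0) hd1
  have P1 : ω 1 * ι ℝ a * (ι ℝ v1 * ι ℝ v2) = 0 := hZ3 _ (mul_ι_mem_Lam3 (hL2 1) a) hd2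
  have P2 : ω 2 * ι ℝ a * (ι ℝ v1 * ι ℝ v2) = 0 := hZ3 _ (mul_ι_mem_Lam3 (hL2 2) a) hd3
  have hv00 : ω 0 * ω 0 = v := by simpa using hprod 0 0
  have hswap12 : ι ℝ v2 * ι ℝ v1 = -(ι ℝ v1 * ι ℝ v2) :=
    eq_neg_of_add_eq_zero_left (ι_add_mul_swap _ _)
  by_cases ha : a ∈ Submodule.span ℝ ({v1, v2} : Set (Fin 5 → ℝ))
  case pos =>
    obtain ⟨c1, c2, hc⟩ := Submodule.mem_span_pair.mp ha
    have hane : a ≠ 0 := by rintro rfl; exact hva (by simp)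
    obtain ⟨p, hli2, hw0⟩ : ∃ p, LinearIndependent ℝ ![a, p] ∧
        ω 0 * (ι ℝ a * ι ℝ p) = 0 := by
      rcases eq_or_ne c1 0 with h1 | h1
      · have hc2ne : c2 ≠ 0 := by
          rintro rfl; exact hane (by rw [← hc, h1]; simp)
        refine ⟨v1, ?_, ?_⟩
        · rw [LinearIndependent.pair_iff]
          intro s t hst
          have h2 : t • v1 + (s * c2) • v2 = (0 : Fin 5 → ℝ) := by
            rw [← hst, ← hc, h1]; module
          obtain ⟨ht0, hsc⟩ := LinearIndependent.pair_iff.mp hvli t (s * c2) h2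
          have hs0 : s = 0 := by
            rcases mul_eq_zero.mp hsc with h' | h'
            · exact h'
            · exact absurd h' hc2ne
          exact ⟨hs0, ht0⟩
        · have hia : ι ℝ a = c2 • ι ℝ v2 := by rw [← hc, h1]; simp
          have hx : ι ℝ a * ι ℝ v1 = (-c2) • (ι ℝ v1 * ι ℝ v2) := by
            rw [hia, smul_mul_assoc, hswap12]; module
          rw [hx, mul_smul_comm, P0, smul_zero]
      · refine ⟨v2, ?_, ?_⟩
        · rw [LinearIndependent.pair_iff]
          intro s t hst
          have h2 : (s * c1) • v1 + (s * c2 + t) • v2 = (0 : Fin 5 → ℝ) := by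
            rw [← hst, ← hc]; module
          obtain ⟨hA, hB⟩ := LinearIndependent.pair_iff.mp hvli _ _ h2
          have hs0 : s = 0 := by
            rcases mul_eq_zero.mp hA with h' | h'
            · exact h'
            · exact absurd h' h1
          refine ⟨hs0, ?_⟩
          rw [hs0] at hB; linarith
        · have hia : ι ℝ a = c1 • ι ℝ v1 + c2 • ι ℝ v2 := by rw [← hc]; simp
          have hx : ι ℝ a * ι ℝ v2 = c1 • (ι ℝ v1 * ι ℝ v2) := by
            rw [hia, add_mul, smul_mul_assoc, smul_mul_assoc, ι_sq_zero]; module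
          rw [hx, mul_smul_comm, P0, smul_zero]
    obtain ⟨f, hf⟩ := exists_basis_extending (by norm_num) ![a, p] hli2
    set Φ := map (f.equivFun : (Fin 5 → ℝ) ≃ₗ[ℝ] (Fin 5 → ℝ)).toLinearMap with hΦdef
    have hΦa : Φ (ι ℝ a) = e 0 := by
      have h' := hf 0
      rw [show (![a, p] : Fin 2 → Fin 5 → ℝ) 0 = a from rfl] at h'
      rw [← h']; exact equivFun_basis f _
    have hΦp : Φ (ι ℝ p) = e 1 := by
      have h' := hf 1
      rw [show (![a, p] : Fin 2 → Fin 5 → ℝ) 1 = p from rfl] at h'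
      rw [← h']; exact equivFun_basis f _
    obtain ⟨c, hc0⟩ : ∃ c, Φ (ω 0) = S c := S_rep (Lam2_le (map_mem_Lam2 f.equivFun (hL2 0)))
    have hE1 : S c * (e 0 * e 1) = 0 := by
      have h' : Φ (ω 0 * (ι ℝ a * ι ℝ p)) = Φ 0 := by rw [hw0]
      rw [map_mul, map_mul, hΦa, hΦp, map_zero, hc0] at h'
      exact h'
    have hVa : BA c c • E5 ≠ 0 := by
      rw [← expandA]
      have h' : Φ (v * ι ℝ a) ≠ 0 := Phi_ne_zero f.equivFun hva
      rw [map_mul, hΦa, ← hv00, map_mul, hc0] at h'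
      exact h'
    have hE5 : E5 ≠ 0 := fun h' => hVa (by rw [h', smul_zero])
    have hz : ∀ r : ℝ, r • E5 = 0 → r = 0 := by
      intro r hr
      by_contra hrne
      apply hE5
      have h'' := congrArg (fun x => r⁻¹ • x) hr
      simpa [smul_smul, inv_mul_cancel₀ hrne] using h''
    have h7 : c 7 = 0 := hz _ (by rw [← expandF c, hE1, zero_mul])
    have h8 : -(c 8) = 0 := hz _ (by rw [← expandE c, hE1, zero_mul])
    have h9 : c 9 = 0 := hz _ (by rw [← expandD c, hE1, zero_mul])
    apply hVa
    have h8' : c 8 = 0 := by linarith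
    have hBA : BA c c = 0 := by rw [BA, h7, h8', h9]; ring
    rw [hBA, zero_smul]
  case neg =>
    have hli3 : LinearIndependent ℝ (Fin.cons a ![v1, v2] : Fin 3 → (Fin 5 → ℝ)) := by
      rw [linearIndependent_fin_cons]
      refine ⟨hvli, ?_⟩
      intro hmem
      apply ha
      have hrg : Set.range ![v1, v2] = ({v1, v2} : Set (Fin 5 → ℝ)) := by
        ext x
        constructor
        · rintro ⟨i, rfl⟩
          fin_cases i <;> simp
        · intro hx
          simp only [Set.mem_insert_iff, Set.mem_singleton_iff] at hx
          rcases hx with rfl | rfl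
          · exact ⟨0, rfl⟩
          · exact ⟨1, rfl⟩
      rwa [hrg] at hmem
    obtain ⟨f, hf⟩ := exists_basis_extending (by norm_num) _ hli3
    set Φ := map (f.equivFun : (Fin 5 → ℝ) ≃ₗ[ℝ] (Fin 5 → ℝ)).toLinearMap with hΦdef
    have hΦa : Φ (ι ℝ a) = e 0 := by
      have h' := hf 0
      rw [show (Fin.cons a ![v1, v2] : Fin 3 → (Fin 5 → ℝ)) 0 = a from rfl] at h'
      rw [← h']; exact equivFun_basis f _
    have hΦ1 : Φ (ι ℝ v1) = e 1 := by
      have h' := hf 1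
      rw [show (Fin.cons a ![v1, v2] : Fin 3 → (Fin 5 → ℝ)) 1 = v1 from rfl] at h'
      rw [← h']; exact equivFun_basis f _
    have hΦ2 : Φ (ι ℝ v2) = e 2 := by
      have h' := hf 2
      rw [show (Fin.cons a ![v1, v2] : Fin 3 → (Fin 5 → ℝ)) 2 = v2 from rfl] at h'
      rw [← h']; exact equivFun_basis f _
    have hrep : ∀ i : Fin 3, ∃ c, Φ (ω i) = S c :=
      fun i => S_rep (Lam2_le (map_mem_Lam2 f.equivFun (hL2 i)))
    choose C hC using hrep
    set t := BA (C 0) (C 0) with hT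
    have hVa : t • E5 ≠ 0 := by
      rw [hT, ← expandA]
      have h' : Φ (v * ι ℝ a) ≠ 0 := Phi_ne_zero f.equivFun hva
      rw [map_mul, hΦa, ← hv00, map_mul, hC 0] at h'
      exact h'
    have hE5 : E5 ≠ 0 := fun h' => hVa (by rw [h', smul_zero])
    have ht : t ≠ 0 := fun h' => hVa (by rw [h', zero_smul])
    have hz : ∀ r : ℝ, r • E5 = 0 → r = 0 := by
      intro r hr
      by_contra hrne
      apply hE5
      have h'' := congrArg (fun x => r⁻¹ • x) hr
      simpa [smul_smul, inv_mul_cancel₀ hrne] using h''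
    have h90 : C 0 9 = 0 := by
      refine hz _ ?_
      rw [← expandB (C 0)]
      have h' : Φ (ω 0 * (ι ℝ v1 * ι ℝ v2)) = Φ 0 := by rw [P0]
      rw [map_mul, map_mul, hΦ1, hΦ2, map_zero, hC 0] at h'
      rw [h', zero_mul]
    have h91 : C 1 9 = 0 := by
      refine hz _ ?_
      rw [← expandC (C 1)]
      have h' : Φ (ω 1 * ι ℝ a * (ι ℝ v1 * ι ℝ v2)) = Φ 0 := by rw [P1]
      rw [map_mul, map_mul, map_mul, hΦ1, hΦ2, hΦa, map_zero, hC 1] at h'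
      exact h'
    have h92 : C 2 9 = 0 := by
      refine hz _ ?_
      rw [← expandC (C 2)]
      have h' : Φ (ω 2 * ι ℝ a * (ι ℝ v1 * ι ℝ v2)) = Φ 0 := by rw [P2]
      rw [map_mul, map_mul, map_mul, hΦ1, hΦ2, hΦa, map_zero, hC 2] at h'
      exact h'
    have h9 : ∀ i : Fin 3, C i 9 = 0 := by
      intro i; fin_cases i
      · exact h90
      · exact h91
      · exact h92
    have hGram : ∀ i j : Fin 3, BA (C i) (C j) = if i = j then t else 0 := by
      intro i j
      have hij : Φ (ω i * ω j) * e 0 = Φ (if i = j then v else 0) * e 0 := by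
        rw [hprod i j]
      rw [map_mul, hC i, hC j, expandA] at hij
      by_cases h' : i = j
      · rw [if_pos h'] at hij ⊢
        rw [← hv00, map_mul, hC 0, expandA, ← hT] at hij
        have h0 := sub_eq_zero.mpr hij
        rw [← sub_smul] at h0
        have := hz _ h0
        linarith
      · rw [if_neg h'] at hij ⊢
        rw [map_zero, zero_mul] at hij
        exact hz _ hij
    refine core (fun i => C i 6) (fun i => C i 5) (fun i => C i 8) (fun i => C i 7) t ht
      fun i j => ?_
    have hg := hGram i j
    rw [BA] at hg
    have h9i := h9 i
    have h9j := h9 j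
    by_cases h' : i = j
    · rw [if_pos h'] at hg ⊢
      linear_combination hg - (C i 4) * h9j - (C j 4) * h9i
    · rw [if_neg h'] at hg ⊢
      linear_combination hg - (C i 4) * h9j - (C j 4) * h9i
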